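/- There is no bounded function g on a punctured disk around 0 such that g(z) - log(|z|²) is holomorphic on the punctured disk. -/

import Mathlib

open Complex Metric Set Filter Asymptotics Topology

/-- There is no bounded function `g` on a punctured disk around `0` such that
`g(z) - log |z|²` is holomorphic on the punctured disk. -/
theorem no_bounded_log_correction (r : ℝ) (hr : 0 < r) :
    ¬ ∃ (g : ℂ → ℂ) (C : ℝ),
        (∀ z ∈ ball (0 : ℂ) r \ {0}, ‖g z‖ ≤ C) ∧
        DifferentiableOn ℂ (fun z => g z - (Real.log (‖z‖ ^ 2) : ℂ))
          (ball (0 : ℂ) r \ {0}) := by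
  rintro ⟨g, C, hC, hd⟩
  set f : ℂ → ℂ := fun z => g z - (Real.log (‖z‖ ^ 2) : ℂ) with hf
  have hso : IsOpen (ball (0:ℂ) r \ {0}) := isOpen_ball.sdiff isClosed_singleton
  have hmem : ball (0:ℂ) r \ {0} ∈ 𝓝[≠] (0:ℂ) := by
    rw [mem_nhdsWithin]
    exact ⟨ball 0 r, isOpen_ball, mem_ball_self hr, fun z hz => ⟨hz.1, hz.2⟩⟩
  have hd' : ∀ᶠ z in 𝓝[≠] (0:ℂ), DifferentiableAt ℂ f z :=
    eventually_of_mem hmem fun z hz => hd.differentiableAt (hso.mem_nhds hz)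
  -- norm tends to 0 from the right
  have hnorm : Tendsto (fun z : ℂ => ‖z‖) (𝓝[≠] (0:ℂ)) (𝓝[>] (0:ℝ)) := by
    rw [tendsto_nhdsWithin_iff]
    constructor
    · simpa using (continuous_norm.tendsto (0:ℂ)).mono_left nhdsWithin_le_nhds
    · exact eventually_mem_nhdsWithin.mono fun z hz => by
        simpa [Set.mem_Ioi, norm_pos_iff] using hz
  have hlog : Tendsto (fun z : ℂ => Real.log ‖z‖ * ‖z‖) (𝓝[≠] (0:ℂ)) (𝓝 0) := by
    have := (tendsto_log_mul_rpow_nhdsGT_zero one_pos).comp hnorm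
    simpa [Function.comp_def, Real.rpow_one] using this
  -- key tendsto
  have key : Tendsto (fun z : ℂ => ‖z‖ * ‖f z - f 0‖) (𝓝[≠] (0:ℂ)) (𝓝 0) := by
    have hG : Tendsto (fun z : ℂ => (C + ‖f 0‖) * ‖z‖ + 2 * |Real.log ‖z‖ * ‖z‖|)
        (𝓝[≠] (0:ℂ)) (𝓝 0) := by
      have h1 : Tendsto (fun z : ℂ => (C + ‖f 0‖) * ‖z‖) (𝓝[≠] (0:ℂ)) (𝓝 0) := by
        have : Tendsto (fun z : ℂ => ‖z‖) (𝓝[≠] (0:ℂ)) (𝓝 0) :=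
          hnorm.mono_right nhdsWithin_le_nhds
        simpa using this.const_mul (C + ‖f 0‖)
      have h2 : Tendsto (fun z : ℂ => 2 * |Real.log ‖z‖ * ‖z‖|) (𝓝[≠] (0:ℂ)) (𝓝 0) := by
        simpa using (hlog.abs).const_mul 2
      simpa using h1.add h2
    refine squeeze_zero' (Eventually.of_forall fun z => by positivity)
      (eventually_of_mem hmem fun z hz => ?_) hG
    have hz0 : z ≠ 0 := hz.2
    have hzpos : (0:ℝ) < ‖z‖ := norm_pos_iff.2 hz0
    have hfz : ‖f z‖ ≤ C + |Real.log (‖z‖ ^ 2)| := by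
      have h := norm_sub_le (g z) ((Real.log (‖z‖ ^ 2) : ℝ) : ℂ)
      rw [Complex.norm_real] at h
      exact h.trans (add_le_add (hC z hz) (le_of_eq (Real.norm_eq_abs _)))
    have habs : |Real.log (‖z‖ ^ 2)| = 2 * |Real.log ‖z‖| := by
      rw [Real.log_pow]
      simp [abs_mul]
    have h1 : ‖z‖ * ‖f z - f 0‖ ≤ ‖z‖ * (‖f z‖ + ‖f 0‖) :=
      mul_le_mul_of_nonneg_left (norm_sub_le _ _) hzpos.le
    have h2 : ‖z‖ * (‖f z‖ + ‖f 0‖) ≤ ‖z‖ * (C + ‖f 0‖ + 2 * |Real.log ‖z‖|) := by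
      apply mul_le_mul_of_nonneg_left _ hzpos.le
      rw [habs] at hfz
      linarith
    have h3 : ‖z‖ * (C + ‖f 0‖ + 2 * |Real.log ‖z‖|)
        = (C + ‖f 0‖) * ‖z‖ + 2 * |Real.log ‖z‖ * ‖z‖| := by
      rw [abs_mul, _root_.abs_of_nonneg hzpos.le]; ring
    linarith [h1.trans (h2.trans_eq h3)]
  -- little-o
  have ho : (fun z => f z - f 0) =o[𝓝[≠] (0:ℂ)] fun z => (z - 0)⁻¹ := by
    rw [isLittleO_iff]
    intro ε hε
    filter_upwards [key.eventually (eventually_le_nhds hε), eventually_mem_nhdsWithin]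
      with z h1 h2
    have hz0 : z ≠ (0:ℂ) := h2
    have hzpos : (0:ℝ) < ‖z‖ := norm_pos_iff.2 hz0
    rw [sub_zero, norm_inv]
    rw [← div_eq_mul_inv, le_div_iff₀ hzpos, mul_comm]
    exact h1
  have htends := Complex.tendsto_limUnder_of_differentiable_on_punctured_nhds_of_isLittleO hd' ho
  set L := limUnder (𝓝[≠] (0:ℂ)) f
  have hfb : ∀ᶠ z in 𝓝[≠] (0:ℂ), ‖f z‖ ≤ ‖L‖ + 1 := by
    have := (htends.norm).eventually (eventually_le_nhds (by linarith [norm_nonneg L] : ‖L‖ < ‖L‖ + 1))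
    exact this
  have hlogbot : Tendsto (fun z : ℂ => Real.log ‖z‖) (𝓝[≠] (0:ℂ)) atBot :=
    Real.tendsto_log_nhdsGT_zero.comp hnorm
  have hsmall : ∀ᶠ z in 𝓝[≠] (0:ℂ), Real.log ‖z‖ ≤ -(C + ‖L‖ + 2) :=
    hlogbot.eventually (eventually_le_atBot _)
  obtain ⟨z, hz1, hz2, hz3⟩ := (hfb.and (hsmall.and (eventually_of_mem hmem fun z hz => hz))).exists
  -- derive contradiction
  have hCpos : 0 ≤ C := (norm_nonneg _).trans (hC z hz3)
  have hgf : ((Real.log (‖z‖ ^ 2) : ℝ) : ℂ) = g z - f z := by simp [hf]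
  have hb : |Real.log (‖z‖ ^ 2)| ≤ C + (‖L‖ + 1) := by
    have : ‖((Real.log (‖z‖ ^ 2) : ℝ) : ℂ)‖ ≤ ‖g z‖ + ‖f z‖ := by
      rw [hgf]; exact norm_sub_le _ _
    rw [Complex.norm_real] at this
    exact this.trans (add_le_add (hC z hz3) hz1)
  have hlow : Real.log (‖z‖ ^ 2) ≤ 2 * (-(C + ‖L‖ + 2)) := by
    rw [Real.log_pow]; push_cast; linarith
  have := neg_abs_le (Real.log (‖z‖ ^ 2))
  have hL : 0 ≤ ‖L‖ := norm_nonneg L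
  linarith
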